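/- Let K and K̃ be symmetric PSD n×n matrices, λ > 0, ε ≥ 0, and suppose K − K̃ ⪯ λε·I (i.e., λε·I − (K − K̃) is PSD) and K̃ − K ⪯ λε·I. Let z ∈ ℝⁿ, α_opt = (K + λI)⁻¹z and α̂ = (K̃ + λI)⁻¹z. Then ‖α̂ − α_opt‖₂ ≤ ε‖α_opt‖₂. -/

import Mathlib

open Matrix

/-- Spectral approximation gives a (1+ε)-approximate KRR solution. -/
theorem stmt_1 (n : ℕ) (K Kt : Matrix (Fin n) (Fin n) ℝ)
    (hK : K.PosSemidef) (hKt : Kt.PosSemidef)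
    (lam ε : ℝ) (hlam : 0 < lam) (hε : 0 ≤ ε)
    (h1 : ((lam * ε) • (1 : Matrix (Fin n) (Fin n) ℝ) - (K - Kt)).PosSemidef)
    (h2 : ((lam * ε) • (1 : Matrix (Fin n) (Fin n) ℝ) - (Kt - K)).PosSemidef)
    (z : Fin n → ℝ)
    (αopt αhat : Fin n → ℝ)
    (hopt : αopt = (K + lam • (1 : Matrix (Fin n) (Fin n) ℝ))⁻¹.mulVec z)
    (hhat : αhat = (Kt + lam • (1 : Matrix (Fin n) (Fin n) ℝ))⁻¹.mulVec z) :
    Real.sqrt (∑ i, (αhat i - αopt i) ^ 2) ≤ ε * Real.sqrt (∑ i, αopt i ^ 2) := by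
  set c : ℝ := lam * ε with hc
  have hc0 : 0 ≤ c := mul_nonneg hlam.le hε
  set M : Matrix (Fin n) (Fin n) ℝ := K - Kt with hMdef
  -- positive definiteness of regularized matrices
  have hI : (lam • (1 : Matrix (Fin n) (Fin n) ℝ)).PosDef := by
    rw [smul_one_eq_diagonal]
    exact Matrix.posDef_diagonal_iff.mpr fun _ => hlam
  have hB : (K + lam • (1 : Matrix (Fin n) (Fin n) ℝ)).PosDef := Matrix.PosDef.posSemidef_add hK hI
  have hBt : (Kt + lam • (1 : Matrix (Fin n) (Fin n) ℝ)).PosDef := Matrix.PosDef.posSemidef_add hKt hI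
  -- the defining equations
  have hBz : (K + lam • (1 : Matrix (Fin n) (Fin n) ℝ)) *ᵥ αopt = z := by
    rw [hopt, mulVec_mulVec, Matrix.mul_nonsing_inv _ ((Matrix.isUnit_iff_isUnit_det _).mp hB.isUnit), one_mulVec]
  have hBtz : (Kt + lam • (1 : Matrix (Fin n) (Fin n) ℝ)) *ᵥ αhat = z := by
    rw [hhat, mulVec_mulVec, Matrix.mul_nonsing_inv _ ((Matrix.isUnit_iff_isUnit_det _).mp hBt.isUnit), one_mulVec]
  set w : Fin n → ℝ := αhat - αopt with hw
  set v : Fin n → ℝ := αopt with hv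
  have hkey : (Kt + lam • (1 : Matrix (Fin n) (Fin n) ℝ)) *ᵥ w = M *ᵥ v := by
    rw [hw, mulVec_sub, hBtz, ← hBz, hMdef, sub_mulVec]
    ring_nf
    rw [add_mulVec, add_mulVec]
    ring
  -- symmetry of M
  have hsym : ∀ x y : Fin n → ℝ, x ⬝ᵥ (M *ᵥ y) = y ⬝ᵥ (M *ᵥ x) := by
    intro x y
    have hH : Mᵀ = M := by
      have e1 : Kᵀ = K := hK.isHermitian.eq
      have e2 : Ktᵀ = Kt := hKt.isHermitian.eq
      simp [hMdef, transpose_sub, e1, e2]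
    rw [dotProduct_mulVec, ← mulVec_transpose, hH, dotProduct_comm]
  -- quadratic form bounds from h1 h2
  have hP1 : ∀ x : Fin n → ℝ, x ⬝ᵥ (M *ᵥ x) ≤ c * (x ⬝ᵥ x) := by
    intro x
    have := h1.dotProduct_mulVec_nonneg x
    simp only [star_trivial, sub_mulVec, smul_mulVec, one_mulVec, dotProduct_sub,
      dotProduct_smul, smul_eq_mul] at this
    linarith
  have hP2 : ∀ x : Fin n → ℝ, -(c * (x ⬝ᵥ x)) ≤ x ⬝ᵥ (M *ᵥ x) := by
    intro x
    have := h2.dotProduct_mulVec_nonneg x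
    have hKtK : Kt - K = -M := by rw [hMdef, neg_sub]
    rw [hKtK] at this
    simp only [star_trivial, sub_mulVec, smul_mulVec, one_mulVec, neg_mulVec,
      dotProduct_sub, dotProduct_smul, dotProduct_neg, smul_eq_mul] at this
    linarith
  set u : Fin n → ℝ := M *ᵥ v with hu
  set a : ℝ := v ⬝ᵥ v with ha
  set b : ℝ := u ⬝ᵥ u with hb
  have ha0 : 0 ≤ a := by simpa using dotProduct_star_self_nonneg v
  have hb0 : 0 ≤ b := by simpa using dotProduct_star_self_nonneg u
  -- the polarization inequality
  have hpol : ∀ t : ℝ, 2 * t * b ≤ c * t ^ 2 * a + c * b := by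
    intro t
    have e1 := hP1 (t • v + u)
    have e2 := hP2 (t • v - u)
    have hMu : u ⬝ᵥ (M *ᵥ v) = b := by rw [← hu]
    have hvu : v ⬝ᵥ (M *ᵥ u) = b := by rw [hsym v u, hMu]
    simp only [mulVec_add, mulVec_sub, mulVec_smul, dotProduct_add, dotProduct_sub,
      add_dotProduct, sub_dotProduct, smul_dotProduct, dotProduct_smul, smul_eq_mul,
      hMu, hvu] at e1 e2
    have hcomm : v ⬝ᵥ u = u ⬝ᵥ v := dotProduct_comm v u
    nlinarith [e1, e2]
  -- deduce b ≤ c^2 * a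
  have hbca : b ≤ c ^ 2 * a := by
    rcases eq_or_lt_of_le hb0 with hbz | hbp
    · exact hbz ▸ by positivity
    rcases eq_or_lt_of_le hc0 with hcz | hcp
    · have := hpol 1; nlinarith
    · have := hpol c; nlinarith
  -- lower bound for the regularized quadratic form
  have hlow : lam ^ 2 * (w ⬝ᵥ w) ≤ b := by
    have hBw : (Kt + lam • (1 : Matrix (Fin n) (Fin n) ℝ)) *ᵥ w = u := hkey
    have hexp : ((Kt *ᵥ w + lam • w) ⬝ᵥ (Kt *ᵥ w + lam • w) : ℝ)
        = (Kt *ᵥ w) ⬝ᵥ (Kt *ᵥ w) + 2 * lam * (w ⬝ᵥ (Kt *ᵥ w)) + lam ^ 2 * (w ⬝ᵥ w) := by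
      have hc1 : (Kt *ᵥ w) ⬝ᵥ w = w ⬝ᵥ (Kt *ᵥ w) := dotProduct_comm _ _
      simp only [dotProduct_add, add_dotProduct, smul_dotProduct, dotProduct_smul, smul_eq_mul, hc1]
      ring
    have hwKt : 0 ≤ w ⬝ᵥ (Kt *ᵥ w) := by simpa using hKt.dotProduct_mulVec_nonneg w
    have hKtw : 0 ≤ (Kt *ᵥ w) ⬝ᵥ (Kt *ᵥ w) := by simpa using dotProduct_star_self_nonneg (Kt *ᵥ w)
    have : (Kt + lam • (1 : Matrix (Fin n) (Fin n) ℝ)) *ᵥ w = Kt *ᵥ w + lam • w := by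
      rw [add_mulVec, smul_mulVec, one_mulVec]
    rw [this] at hBw
    have : b = (Kt *ᵥ w + lam • w) ⬝ᵥ (Kt *ᵥ w + lam • w) := by rw [hBw, hb]
    rw [this, hexp]
    nlinarith
  -- combine
  have hmain : w ⬝ᵥ w ≤ ε ^ 2 * a := by
    have h1' : lam ^ 2 * (w ⬝ᵥ w) ≤ c ^ 2 * a := le_trans hlow hbca
    have : c ^ 2 * a = lam ^ 2 * (ε ^ 2 * a) := by rw [hc]; ring
    rw [this] at h1'
    have hl2 : 0 < lam ^ 2 := by positivity
    exact le_of_mul_le_mul_left h1' hl2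
  have hsum1 : (∑ i, (αhat i - αopt i) ^ 2) = w ⬝ᵥ w := by
    simp [hw, dotProduct, pow_two, Pi.sub_apply, hv]
  have hsum2 : (∑ i, αopt i ^ 2) = a := by
    simp [ha, hv, dotProduct, pow_two]
  rw [hsum1, hsum2]
  calc Real.sqrt (w ⬝ᵥ w) ≤ Real.sqrt (ε ^ 2 * a) := Real.sqrt_le_sqrt hmain
    _ = ε * Real.sqrt a := by
        rw [Real.sqrt_mul (sq_nonneg ε), Real.sqrt_sq hε]
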